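/- Fix d ≥ 1, vectors v_1, …, v_{d+1} ∈ ℝ^d satisfying the simplex conditions, κ_k⁺, κ_k⁻ ≥ 0 (k = 1, …, d), and an invertible d×d real matrix σ. There exists a Borel measurable map Ψ : Γ → B such that for every a ∈ Γ one has a = σσᵀ + σΨ(a) + Ψ(a)ᵀσᵀ. -/

import Mathlib

open scoped BigOperators
open Matrix

/-- The set `B` of matrices whose `k`-th column is `∑ⱼ w_{jk} vⱼᵀ` with
`w_{jk} ∈ [0, (κₖ⁺+κₖ⁻)/(d+1)]`. -/
def simplexB (d : ℕ) (v : Fin (d + 1) → Fin d → ℝ) (κp κm : Fin d → ℝ) :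
    Set (Matrix (Fin d) (Fin d) ℝ) :=
  {β | ∃ w : Fin (d + 1) → Fin d → ℝ,
      (∀ j k, w j k ∈ Set.Icc (0 : ℝ) ((κp k + κm k) / (d + 1))) ∧
      ∀ a k, β a k = ∑ j, w j k * v j a}

/-- The set `Γ` of (symmetric) matrices `σσᵀ + σβ + βᵀσᵀ` with `β ∈ B`. -/
def simplexGamma (d : ℕ) (v : Fin (d + 1) → Fin d → ℝ) (κp κm : Fin d → ℝ)
    (σ : Matrix (Fin d) (Fin d) ℝ) : Set (Matrix (Fin d) (Fin d) ℝ) :=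
  {a | ∃ β ∈ simplexB d v κp κm, a = σ * σᵀ + σ * β + βᵀ * σᵀ}

/-- Matrices carry the Borel σ-algebra (the product σ-algebra of entries). -/
instance matrixMeasurableSpace (d : ℕ) : MeasurableSpace (Matrix (Fin d) (Fin d) ℝ) :=
  MeasurableSpace.pi

instance matrixBorelSpace (d : ℕ) : BorelSpace (Matrix (Fin d) (Fin d) ℝ) :=
  Pi.borelSpace

namespace SimplexSel

variable {d : ℕ} {v : Fin (d + 1) → Fin d → ℝ} {κp κm : Fin d → ℝ}
  {σ : Matrix (Fin d) (Fin d) ℝ}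

/-- the affine map `β ↦ σσᵀ + σβ + βᵀσᵀ`. -/
def fmap (σ β : Matrix (Fin d) (Fin d) ℝ) : Matrix (Fin d) (Fin d) ℝ :=
  σ * σᵀ + σ * β + βᵀ * σᵀ

lemma fmap_continuous : Continuous (fmap σ) :=
  (continuous_const.add (continuous_const.matrix_mul continuous_id)).add
    (continuous_id.matrix_transpose.matrix_mul continuous_const)

/-- the squared Frobenius norm -/
def gfun (β : Matrix (Fin d) (Fin d) ℝ) : ℝ :=
  ∑ p : Fin d × Fin d, (β p.1 p.2) ^ 2

lemma gfun_continuous : Continuous (gfun (d := d)) := by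
  apply continuous_finset_sum
  intro p _
  exact (((continuous_apply p.2).comp (continuous_apply p.1))).pow 2

lemma isCompact_B : IsCompact (simplexB d v κp κm) := by
  have h : simplexB d v κp κm =
      (fun w : Fin (d + 1) → Fin d → ℝ =>
        (Matrix.of fun a k => ∑ j, w j k * v j a)) ''
        (Set.univ.pi fun _j => Set.univ.pi fun k =>
          Set.Icc (0 : ℝ) ((κp k + κm k) / (d + 1))) := by
    ext β
    constructor
    · rintro ⟨w, hw, hβ⟩
      exact ⟨w, fun j _ => fun k _ => hw j k, (Matrix.ext fun a k => (hβ a k)).symm⟩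
    · rintro ⟨w, hw, rfl⟩
      exact ⟨w, fun j k => hw j (Set.mem_univ j) k (Set.mem_univ k), fun a k => rfl⟩
  rw [h]
  refine IsCompact.image ?_ ?_
  · exact isCompact_univ_pi fun _ => isCompact_univ_pi fun _ => isCompact_Icc
  · apply continuous_pi
    intro a
    apply continuous_pi
    intro k
    change Continuous fun w : Fin (d + 1) → Fin d → ℝ => ∑ j, w j k * v j a
    exact continuous_finset_sum _ fun j _ =>
      ((continuous_apply k).comp (continuous_apply j) :
        Continuous fun w : Fin (d + 1) → Fin d → ℝ => w j k).mul continuous_const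

lemma convex_B : Convex ℝ (simplexB d v κp κm) := by
  rintro β₁ ⟨w₁, hw₁, h₁⟩ β₂ ⟨w₂, hw₂, h₂⟩ p q hp hq hpq
  refine ⟨fun j k => p * w₁ j k + q * w₂ j k, fun j k => ?_, fun a k => ?_⟩
  · constructor
    · show (0:ℝ) ≤ p * w₁ j k + q * w₂ j k
      have h1 : 0 ≤ p * w₁ j k := mul_nonneg hp (hw₁ j k).1
      have h2 : 0 ≤ q * w₂ j k := mul_nonneg hq (hw₂ j k).1
      linarith
    · have h1 : p * w₁ j k ≤ p * ((κp k + κm k) / (d + 1)) :=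
        mul_le_mul_of_nonneg_left (hw₁ j k).2 hp
      have h2 : q * w₂ j k ≤ q * ((κp k + κm k) / (d + 1)) :=
        mul_le_mul_of_nonneg_left (hw₂ j k).2 hq
      show p * w₁ j k + q * w₂ j k ≤ (κp k + κm k) / (d + 1)
      have h3 : p * ((κp k + κm k) / (d + 1)) + q * ((κp k + κm k) / (d + 1))
          = (κp k + κm k) / (d + 1) := by rw [← add_mul, hpq, one_mul]
      linarith
  · have : (p • β₁ + q • β₂) a k = p * β₁ a k + q * β₂ a k := by
      simp [Matrix.add_apply, Matrix.smul_apply, smul_eq_mul]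
    rw [this, h₁ a k, h₂ a k, Finset.mul_sum, Finset.mul_sum, ← Finset.sum_add_distrib]
    exact Finset.sum_congr rfl fun j _ => by ring

lemma fmap_affine {x β₁ β₂ : Matrix (Fin d) (Fin d) ℝ} (h₁ : fmap σ β₁ = x)
    (h₂ : fmap σ β₂ = x) {p q : ℝ} (hpq : p + q = 1) :
    fmap σ (p • β₁ + q • β₂) = x := by
  have key : fmap σ (p • β₁ + q • β₂) = p • fmap σ β₁ + q • fmap σ β₂ := by
    unfold fmap
    rw [Matrix.mul_add, Matrix.transpose_add, Matrix.add_mul,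
      Matrix.transpose_smul, Matrix.transpose_smul, Matrix.mul_smul, Matrix.mul_smul,
      Matrix.smul_mul, Matrix.smul_mul]
    match_scalars <;> linarith
  rw [key, h₁, h₂, ← add_smul, hpq, one_smul]

def fiber (v : Fin (d + 1) → Fin d → ℝ) (κp κm : Fin d → ℝ)
    (σ x : Matrix (Fin d) (Fin d) ℝ) : Set (Matrix (Fin d) (Fin d) ℝ) :=
  simplexB d v κp κm ∩ {β | fmap σ β = x}

lemma isCompact_fiber (x : Matrix (Fin d) (Fin d) ℝ) :
    IsCompact (fiber v κp κm σ x) :=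
  isCompact_B.inter_right ((isClosed_singleton (x := x)).preimage fmap_continuous)

lemma convex_fiber (x : Matrix (Fin d) (Fin d) ℝ) :
    Convex ℝ (fiber v κp κm σ x) := by
  refine convex_B.inter ?_
  intro β₁ h₁ β₂ h₂ p q hp hq hpq
  exact fmap_affine h₁ h₂ hpq

lemma min_unique {x β₁ β₂ : Matrix (Fin d) (Fin d) ℝ}
    (h₁ : β₁ ∈ fiber v κp κm σ x) (h₂ : β₂ ∈ fiber v κp κm σ x)
    (hm₁ : ∀ β ∈ fiber v κp κm σ x, gfun β₁ ≤ gfun β)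
    (hm₂ : ∀ β ∈ fiber v κp κm σ x, gfun β₂ ≤ gfun β) : β₁ = β₂ := by
  by_contra hne
  obtain ⟨i, j, hij⟩ : ∃ i j, β₁ i j ≠ β₂ i j := by
    by_contra h
    push_neg at h
    exact hne (Matrix.ext fun i j => h i j)
  set mid := (1/2 : ℝ) • β₁ + (1/2 : ℝ) • β₂ with hmid
  have hmidmem : mid ∈ fiber v κp κm σ x :=
    convex_fiber x h₁ h₂ (by norm_num) (by norm_num) (by norm_num)
  have hpos : 0 < ∑ p : Fin d × Fin d, ((β₁ p.1 p.2 - β₂ p.1 p.2) / 2) ^ 2 := by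
    refine Finset.sum_pos' (fun p _ => sq_nonneg _) ⟨(i, j), Finset.mem_univ _, ?_⟩
    have hne2 : (β₁ i j - β₂ i j) / 2 ≠ 0 := by
      intro h
      apply hij
      field_simp at h
      linarith
    positivity
  have key : gfun mid + ∑ p : Fin d × Fin d, ((β₁ p.1 p.2 - β₂ p.1 p.2) / 2) ^ 2
      = (gfun β₁ + gfun β₂) / 2 := by
    unfold gfun
    rw [← Finset.sum_add_distrib, ← Finset.sum_add_distrib, Finset.sum_div]
    refine Finset.sum_congr rfl fun p _ => ?_
    have hm : mid p.1 p.2 = (1/2) * β₁ p.1 p.2 + (1/2) * β₂ p.1 p.2 := by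
      simp [hmid, Matrix.add_apply, Matrix.smul_apply, smul_eq_mul]
    rw [hm]; ring
  have e12 : gfun β₁ = gfun β₂ :=
    le_antisymm (hm₁ β₂ h₂) (hm₂ β₁ h₁)
  have hlt : gfun mid < gfun β₁ := by
    rw [e12] at key ⊢
    linarith
  exact absurd (hm₁ mid hmidmem) (not_le.mpr hlt)

lemma exists_min {x : Matrix (Fin d) (Fin d) ℝ}
    (hx : x ∈ simplexGamma d v κp κm σ) :
    ∃ β, β ∈ fiber v κp κm σ x ∧ ∀ β' ∈ fiber v κp κm σ x, gfun β ≤ gfun β' := by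
  obtain ⟨β₀, hβ₀, hxe⟩ := hx
  have hne : (fiber v κp κm σ x).Nonempty := ⟨β₀, hβ₀, hxe.symm⟩
  obtain ⟨β, hβ, hmin⟩ :=
    (isCompact_fiber x).exists_isMinOn hne gfun_continuous.continuousOn
  exact ⟨β, hβ, fun β' hβ' => hmin hβ'⟩

lemma measurable_psi (Ψ : simplexGamma d v κp κm σ → Matrix (Fin d) (Fin d) ℝ)
    (hmem : ∀ a : simplexGamma d v κp κm σ, Ψ a ∈ fiber v κp κm σ a.1)
    (hmin : ∀ a : simplexGamma d v κp κm σ, ∀ β ∈ fiber v κp κm σ a.1,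
      gfun (Ψ a) ≤ gfun β) :
    Measurable Ψ := by
  apply measurable_of_isClosed
  intro C hC
  have key : Ψ ⁻¹' C = ⋂ q : ℚ,
      (Subtype.val ⁻¹' (fmap σ ''
        (simplexB d v κp κm ∩ {β | gfun β ≤ (q : ℝ)})))ᶜ ∪
      Subtype.val ⁻¹' (fmap σ ''
        (simplexB d v κp κm ∩ C ∩ {β | gfun β ≤ (q : ℝ)})) := by
    ext a
    simp only [Set.mem_preimage, Set.mem_iInter, Set.mem_union, Set.mem_compl_iff,
      Set.mem_image]
    constructor
    · intro hΨC q
      by_cases hP : ∃ β ∈ simplexB d v κp κm ∩ {β | gfun β ≤ (q : ℝ)},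
          fmap σ β = (a : Matrix (Fin d) (Fin d) ℝ)
      · right
        obtain ⟨β, ⟨hβB, hgq⟩, hfβ⟩ := hP
        refine ⟨Ψ a, ⟨⟨(hmem a).1, hΨC⟩, ?_⟩, (hmem a).2⟩
        exact le_trans (hmin a β ⟨hβB, hfβ⟩) hgq
      · left; exact hP
    · intro h
      set m := gfun (Ψ a) with hm
      let T : {q : ℚ // m < (q : ℝ)} → Set (Matrix (Fin d) (Fin d) ℝ) := fun q =>
        (fiber v κp κm σ a.1 ∩ C) ∩ {β | gfun β ≤ ((q.1 : ℚ) : ℝ)}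
      obtain ⟨q₀, hq₀⟩ := exists_rat_gt m
      haveI : Nonempty {q : ℚ // m < (q : ℝ)} := ⟨⟨q₀, hq₀⟩⟩
      have htn : ∀ q, (T q).Nonempty := by
        rintro ⟨q, hq⟩
        rcases h q with hl | hr
        · exact absurd ⟨Ψ a, ⟨(hmem a).1, le_of_lt hq⟩, (hmem a).2⟩ hl
        · obtain ⟨β, ⟨⟨hβB, hβC⟩, hgq⟩, hfβ⟩ := hr
          exact ⟨β, ⟨⟨hβB, hfβ⟩, hβC⟩, hgq⟩
      have htd : Directed (· ⊇ ·) T := by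
        rintro q₁ q₂
        have hm12 : m < ((min q₁.1 q₂.1 : ℚ) : ℝ) := by
          rw [Rat.cast_min]; exact lt_min q₁.2 q₂.2
        have hle1 : ((min q₁.1 q₂.1 : ℚ) : ℝ) ≤ ((q₁.1 : ℚ) : ℝ) := by
          rw [Rat.cast_min]; exact min_le_left _ _
        have hle2 : ((min q₁.1 q₂.1 : ℚ) : ℝ) ≤ ((q₂.1 : ℚ) : ℝ) := by
          rw [Rat.cast_min]; exact min_le_right _ _
        exact ⟨⟨min q₁.1 q₂.1, hm12⟩, fun β hβ => ⟨hβ.1, le_trans hβ.2 hle1⟩,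
          fun β hβ => ⟨hβ.1, le_trans hβ.2 hle2⟩⟩
      have htc : ∀ q, IsCompact (T q) := fun q =>
        ((isCompact_fiber _).inter_right hC).inter_right
          (isClosed_le gfun_continuous continuous_const)
      obtain ⟨βo, hβo⟩ :=
        IsCompact.nonempty_iInter_of_directed_nonempty_isCompact_isClosed T htd htn htc
          (fun q => (htc q).isClosed)
      simp only [Set.mem_iInter] at hβo
      have hβfib : βo ∈ fiber v κp κm σ a.1 ∩ C :=
        (hβo ⟨q₀, hq₀⟩).1
      have hβle : gfun βo ≤ m := by
        by_contra hcon
        push_neg at hcon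
        obtain ⟨q, hq1, hq2⟩ := exists_rat_btwn hcon
        exact absurd ((hβo ⟨q, hq1⟩).2) (not_le.mpr hq2)
      have hβeq : gfun βo = m := le_antisymm hβle (hmin a βo hβfib.1)
      have : Ψ a = βo :=
        min_unique (hmem a) hβfib.1 (hmin a) (fun β' hβ' => hβeq ▸ hmin a β' hβ')
      rw [this]
      exact hβfib.2
  rw [key]
  refine MeasurableSet.iInter fun q => MeasurableSet.union ?_ ?_
  · refine (MeasurableSet.compl ?_)
    refine measurable_subtype_coe ?_
    refine IsClosed.measurableSet ?_
    exact ((isCompact_B.inter_right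
      (isClosed_le gfun_continuous continuous_const)).image fmap_continuous).isClosed
  · refine measurable_subtype_coe ?_
    refine IsClosed.measurableSet ?_
    exact (((isCompact_B.inter_right hC).inter_right
      (isClosed_le gfun_continuous continuous_const)).image fmap_continuous).isClosed

end SimplexSel


/-- there is a Borel measurable map `Ψ : Γ → B` with
`a = σσᵀ + σΨ(a) + Ψ(a)ᵀσᵀ` for every `a ∈ Γ` (Lemma `lem:pp`(i)). -/
theorem exists_measurable_Psi (d : ℕ) (hd : 1 ≤ d)
    (v : Fin (d + 1) → Fin d → ℝ)
    (hnorm : ∀ i, ∑ k, v i k ^ 2 = (d : ℝ))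
    (hinner : ∀ i j, i ≠ j → ∑ k, v i k * v j k = -1)
    (κp κm : Fin d → ℝ) (hκp : ∀ k, 0 ≤ κp k) (hκm : ∀ k, 0 ≤ κm k)
    (σ : Matrix (Fin d) (Fin d) ℝ) (hσ : IsUnit σ.det) :
    ∃ Ψ : simplexGamma d v κp κm σ → Matrix (Fin d) (Fin d) ℝ,
      Measurable Ψ ∧
      ∀ a : simplexGamma d v κp κm σ,
        Ψ a ∈ simplexB d v κp κm ∧
        (a : Matrix (Fin d) (Fin d) ℝ) = σ * σᵀ + σ * Ψ a + (Ψ a)ᵀ * σᵀ := by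
  choose Ψ hmem hmin using
    fun a : simplexGamma d v κp κm σ => SimplexSel.exists_min a.property
  exact ⟨Ψ, SimplexSel.measurable_psi Ψ hmem hmin,
    fun a => ⟨(hmem a).1, ((hmem a).2).symm⟩⟩
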